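/- arXiv:1510.08341 — 2 statements merged into one kernel-verified Lean document; each statement's English description precedes it below -/
import Mathlib

section
/- The map r ↦ φ(3/r) - φ(1/r) is strictly decreasing on (0,∞), where φ(x) = Σ_{n=1}^∞ (1/n - 1/(n+x)); in particular it equals 2/3 at r = 2, is greater than 2/3 for r < 2, and less than 2/3 for r > 2. -/
private lemma summable_sq : Summable (fun n : ℕ => 1/((n:ℝ)+1)^2) := by
  have := (summable_nat_add_iff 1).mpr (Real.summable_one_div_nat_pow.mpr (by norm_num : (1:ℕ) < 2))
  exact this.congr (by intro n; push_cast; ring)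

private lemma summable_phi {x : ℝ} (hx : 0 ≤ x) :
    Summable (fun n : ℕ => (1 : ℝ) / (n + 1 : ℝ) - 1 / ((n + 1 : ℝ) + x)) := by
  refine Summable.of_nonneg_of_le ?_ ?_ (summable_sq.mul_left x)
  · intro n
    have h1 : (0:ℝ) < (n:ℝ) + 1 := by positivity
    have h2 : (0:ℝ) < (n:ℝ) + 1 + x := by linarith
    have : 1 / ((n:ℝ) + 1 + x) ≤ 1 / ((n:ℝ) + 1) := by
      apply one_div_le_one_div_of_le h1; linarith
    linarith
  · intro n
    have h1 : (0:ℝ) < (n:ℝ) + 1 := by positivity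
    have h2 : (0:ℝ) < (n:ℝ) + 1 + x := by linarith
    have he : (1 : ℝ) / (n + 1 : ℝ) - 1 / ((n + 1 : ℝ) + x) = x / (((n:ℝ)+1) * ((n:ℝ)+1+x)) := by
      field_simp
      ring
    rw [he, mul_one_div, div_le_div_iff₀ (by positivity) (by positivity)]
    nlinarith [mul_nonneg hx (mul_nonneg h1.le hx)]

/-- `φ(x) = Σ_{n≥1} (1/n - 1/(n+x))`. -/
noncomputable def phi (x : ℝ) : ℝ :=
  ∑' n : ℕ, ((1 : ℝ) / (n + 1 : ℝ) - 1 / ((n + 1 : ℝ) + x))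

private lemma summable_d {x y : ℝ} (hx : 0 ≤ x) (hy : 0 ≤ y) :
    Summable (fun n : ℕ => 1 / ((n + 1 : ℝ) + x) - 1 / ((n + 1 : ℝ) + y)) :=
  ((summable_phi hy).sub (summable_phi hx)).congr (by intro n; ring)

private lemma phi_sub {x y : ℝ} (hx : 0 ≤ x) (hy : 0 ≤ y) :
    phi y - phi x = ∑' n : ℕ, (1 / ((n + 1 : ℝ) + x) - 1 / ((n + 1 : ℝ) + y)) := by
  rw [phi, phi, ← Summable.tsum_sub (summable_phi hy) (summable_phi hx)]
  exact tsum_congr fun n => by ring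
private lemma tsum_group3 (f : ℕ → ℝ) (hf : Summable f) :
    ∑' n, f n = ∑' m, (f (3*m) + f (3*m+1) + f (3*m+2)) := by
  have hs : Summable (f ∘ (Nat.divModEquiv 3).symm) :=
    hf.comp_injective (Nat.divModEquiv 3).symm.injective
  calc ∑' n, f n = ∑' p : ℕ × Fin 3, f ((Nat.divModEquiv 3).symm p) :=
        ((Nat.divModEquiv 3).symm.tsum_eq f).symm
    _ = ∑' m, ∑' j : Fin 3, f ((Nat.divModEquiv 3).symm (m, j)) := Summable.tsum_prod hs
    _ = ∑' m, (f (3*m) + f (3*m+1) + f (3*m+2)) := by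
        refine tsum_congr fun m => ?_
        rw [tsum_fintype, Fin.sum_univ_three]
        have h0 : (Nat.divModEquiv 3).symm (m, 0) = 3*m := by
          show m * 3 + ((0 : Fin 3) : ℕ) = 3*m; simp <;> ring
        have h1 : (Nat.divModEquiv 3).symm (m, 1) = 3*m+1 := by
          show m * 3 + ((1 : Fin 3) : ℕ) = 3*m+1; simp <;> ring
        have h2 : (Nat.divModEquiv 3).symm (m, 2) = 3*m+2 := by
          show m * 3 + ((2 : Fin 3) : ℕ) = 3*m+2; simp <;> ring
        rw [h0, h1, h2]

private lemma aux_ineq {p q u v : ℝ} (hp : 0 < p) (hpq : p < q) (hu : 0 ≤ u) (huv : u < v) :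
    1/(v+p) - 1/(v+q) < 1/(u+p) - 1/(u+q) := by
  have h1 : (0:ℝ) < u + p := by linarith
  have h2 : (0:ℝ) < u + q := by linarith
  have h3 : (0:ℝ) < v + p := by linarith
  have h4 : (0:ℝ) < v + q := by linarith
  have e1 : 1/(v+p) - 1/(v+q) = (q-p)/((v+p)*(v+q)) := by field_simp <;> ring
  have e2 : 1/(u+p) - 1/(u+q) = (q-p)/((u+p)*(u+q)) := by field_simp <;> ring
  rw [e1, e2]
  apply div_lt_div_of_pos_left (by linarith) (by positivity)
  nlinarith

private lemma key {a b : ℝ} (ha : 0 < a) (hab : a < b) :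
    phi (3*a) - phi a < phi (3*b) - phi b := by
  have hb : 0 < b := lt_trans ha hab
  have h3a : (0:ℝ) ≤ 3*a := by linarith
  have h3b : (0:ℝ) ≤ 3*b := by linarith
  set d : ℕ → ℝ := fun n => 1 / ((n + 1 : ℝ) + 3*a) - 1 / ((n + 1 : ℝ) + 3*b) with hd
  have hsd : Summable d := summable_d h3a h3b
  have hD3 : phi (3*b) - phi (3*a) = ∑' m, (d (3*m) + d (3*m+1) + d (3*m+2)) := by
    rw [phi_sub h3a h3b, tsum_group3 d hsd]
  set E : ℕ → ℝ := fun m => 1 / ((m + 1 : ℝ) + a) - 1 / ((m + 1 : ℝ) + b) with hE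
  have hsE : Summable E := summable_d ha.le hb.le
  have hD1 : phi b - phi a = ∑' m, E m := phi_sub ha.le hb.le
  have hsG : Summable (fun m => d (3*m) + d (3*m+1) + d (3*m+2)) := by
    have i0 : Summable (fun m : ℕ => d (3*m)) :=
      hsd.comp_injective (fun x y h => by omega)
    have i1 : Summable (fun m : ℕ => d (3*m+1)) :=
      hsd.comp_injective (fun x y h => by omega)
    have i2 : Summable (fun m : ℕ => d (3*m+2)) :=
      hsd.comp_injective (fun x y h => by omega)
    exact (i0.add i1).add i2
  have hdiff : (phi (3*b) - phi (3*a)) - (phi b - phi a)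
      = ∑' m, ((d (3*m) + d (3*m+1) + d (3*m+2)) - E m) := by
    rw [hD3, hD1, Summable.tsum_sub hsG hsE]
  have hpos : ∀ m : ℕ, 0 < (d (3*m) + d (3*m+1) + d (3*m+2)) - E m := by
    intro m
    have hm : (0:ℝ) ≤ (m:ℝ) := Nat.cast_nonneg m
    have hcast0 : ((3*m : ℕ) : ℝ) = 3*(m:ℝ) := by push_cast; ring
    have hcast1 : ((3*m+1 : ℕ) : ℝ) = 3*(m:ℝ)+1 := by push_cast; ring
    have hcast2 : ((3*m+2 : ℕ) : ℝ) = 3*(m:ℝ)+2 := by push_cast; ring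
    have hEm : E m = 3/((3*(m:ℝ)+3)+3*a) - 3/((3*(m:ℝ)+3)+3*b) := by
      simp only [hE]
      have c1 : (0:ℝ) < (m:ℝ) + 1 + a := by linarith
      have c2 : (0:ℝ) < (m:ℝ) + 1 + b := by linarith
      field_simp
    have hA1 : 1/((3*(m:ℝ)+3)+3*a) - 1/((3*(m:ℝ)+3)+3*b)
        < 1/((3*(m:ℝ)+1)+3*a) - 1/((3*(m:ℝ)+1)+3*b) :=
      aux_ineq (by linarith) (by linarith) (by linarith) (by linarith)
    have hA2 : 1/((3*(m:ℝ)+3)+3*a) - 1/((3*(m:ℝ)+3)+3*b)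
        < 1/((3*(m:ℝ)+2)+3*a) - 1/((3*(m:ℝ)+2)+3*b) :=
      aux_ineq (by linarith) (by linarith) (by linarith) (by linarith)
    simp only [hd, hcast0, hcast1, hcast2, hEm]
    have r1 : 3*(m:ℝ)+1+1 = 3*(m:ℝ)+2 := by ring
    have r2 : 3*(m:ℝ)+2+1 = 3*(m:ℝ)+3 := by ring
    have r0 : 3*(m:ℝ)+3+3*a = (3*(m:ℝ)+3)+3*a := by ring
    rw [r1, r2]
    have s1 : 3/(3*(m:ℝ)+3+3*a) = 3*(1/(3*(m:ℝ)+3+3*a)) := by ring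
    have s2 : 3/(3*(m:ℝ)+3+3*b) = 3*(1/(3*(m:ℝ)+3+3*b)) := by ring
    rw [s1, s2]
    linarith [hA1, hA2]
  have hfin : 0 < (phi (3*b) - phi (3*a)) - (phi b - phi a) := by
    rw [hdiff]
    exact Summable.tsum_pos (hsG.sub hsE) (fun m => (hpos m).le) 0 (hpos 0)
  linarith

private lemma phi_at_two : phi (3 / 2) - phi (1 / 2) = 2 / 3 := by
  have h := phi_sub (x := 1/2) (y := 3/2) (by norm_num) (by norm_num)
  rw [h]
  set c : ℕ → ℝ := fun n => 1/((n:ℝ) + 3/2) with hc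
  have hterm : ∀ n : ℕ, 1 / ((n + 1 : ℝ) + 1/2) - 1 / ((n + 1 : ℝ) + 3/2) = c n - c (n+1) := by
    intro n; simp only [hc]; push_cast; ring_nf
  have hsum : Summable (fun n : ℕ => c n - c (n+1)) :=
    (summable_d (by norm_num : (0:ℝ) ≤ 1/2) (by norm_num : (0:ℝ) ≤ 3/2)).congr hterm
  have hps : ∀ N, ∑ n ∈ Finset.range N, (c n - c (n+1)) = c 0 - c N :=
    fun N => Finset.sum_range_sub' c N
  have hc0 : Filter.Tendsto c Filter.atTop (nhds 0) := by
    simp only [hc, one_div]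
    exact tendsto_inv_atTop_zero.comp
      (Filter.tendsto_atTop_add_const_right _ _ tendsto_natCast_atTop_atTop)
  have hlim : Filter.Tendsto (fun N => ∑ n ∈ Finset.range N, (c n - c (n+1)))
      Filter.atTop (nhds (c 0 - 0)) := by
    simp only [hps]
    exact Filter.Tendsto.const_sub _ hc0
  have heq : ∑' n : ℕ, (c n - c (n+1)) = c 0 - 0 :=
    tendsto_nhds_unique hsum.hasSum.tendsto_sum_nat hlim
  calc ∑' n : ℕ, (1 / ((n + 1 : ℝ) + 1/2) - 1 / ((n + 1 : ℝ) + 3/2))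
      = ∑' n : ℕ, (c n - c (n+1)) := tsum_congr hterm
    _ = c 0 - 0 := heq
    _ = 2/3 := by norm_num [hc]

/-- The map `r ↦ φ(3/r) - φ(1/r)` is strictly decreasing on `(0,∞)`, equals `2/3` at
`r = 2`, exceeds `2/3` for `r < 2`, and is less than `2/3` for `r > 2`. -/
theorem phi_diff_strictAnti :
    StrictAntiOn (fun r : ℝ => phi (3 / r) - phi (1 / r)) (Set.Ioi 0) ∧
    phi (3 / 2) - phi (1 / 2) = 2 / 3 ∧
    (∀ r : ℝ, 0 < r → r < 2 → 2 / 3 < phi (3 / r) - phi (1 / r)) ∧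
    (∀ r : ℝ, 2 < r → phi (3 / r) - phi (1 / r) < 2 / 3) := by
  have hanti : StrictAntiOn (fun r : ℝ => phi (3 / r) - phi (1 / r)) (Set.Ioi 0) := by
    intro r hr s hs hrs
    simp only [Set.mem_Ioi] at hr hs
    have h1 : (0:ℝ) < 1/s := by positivity
    have h2 : 1/s < 1/r := one_div_lt_one_div_of_lt hr hrs
    have hk := key h1 h2
    have e1 : 3 * (1/s) = 3/s := by ring
    have e2 : 3 * (1/r) = 3/r := by ring
    rw [e1, e2] at hk
    exact hk
  refine ⟨hanti, phi_at_two, ?_, ?_⟩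
  · intro r hr hr2
    have h := hanti (Set.mem_Ioi.mpr hr) (Set.mem_Ioi.mpr (by norm_num : (0:ℝ) < 2)) hr2
    dsimp only at h
    rw [phi_at_two] at h
    exact h
  · intro r hr2
    have h := hanti (Set.mem_Ioi.mpr (by norm_num : (0:ℝ) < 2)) (Set.mem_Ioi.mpr (by linarith)) hr2
    dsimp only at h
    rw [phi_at_two] at h
    exact h
end

section
/- Let p = Σ_{i=1}^n αᵢ · unif(m - 1/(2εᵢ), m + 1/(2εᵢ)) with αᵢ > 0, Σαᵢ = 1, εᵢ > 0, and r = max_{i,j} εᵢ²/εⱼ². Then e^{2h(p)}/(2πe) ≤ Var(X) ≤ (M(r)/12) e^{2h(p)}. -/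
open MeasureTheory Real Finset

noncomputable def M (r : ℝ) : ℝ :=
  if r = 1 then 1 else (r - 1) * r ^ (1 / (r - 1)) / (Real.exp 1 * Real.log r)

-- helpers

-- pieces from a.lean assumed; here test extra helpers
lemma ite_abs_eq_indicator (m d : ℝ) (g : ℝ → ℝ) :
    (fun x => (if |x - m| ≤ d then 1 else 0) * g x)
      = (Set.Icc (m-d) (m+d)).indicator g := by
  ext x
  by_cases h : |x - m| ≤ d
  · rw [Set.indicator_of_mem, if_pos h, one_mul]
    rw [abs_le] at h
    constructor <;> linarith [h.1, h.2]
  · rw [Set.indicator_of_notMem, if_neg h, zero_mul]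
    intro hx
    exact h (abs_le.2 ⟨by linarith [hx.1], by linarith [hx.2]⟩)

lemma integrable_ite_abs (m d : ℝ) (g : ℝ → ℝ) (hg : Continuous g) :
    Integrable (fun x => (if |x - m| ≤ d then 1 else 0) * g x) := by
  rw [ite_abs_eq_indicator]
  exact (hg.integrableOn_Icc).integrable_indicator measurableSet_Icc

lemma integral_ite_abs (m d : ℝ) (hd : 0 ≤ d) (g : ℝ → ℝ) :
    ∫ x : ℝ, (if |x - m| ≤ d then 1 else 0) * g x = ∫ x in (m-d)..(m+d), g x := by
  rw [ite_abs_eq_indicator, integral_indicator measurableSet_Icc,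
    integral_Icc_eq_integral_Ioc, ← intervalIntegral.integral_of_le (by linarith)]

lemma integral_ite_abs_const (m d c : ℝ) (hd : 0 ≤ d) :
    ∫ x : ℝ, (if |x - m| ≤ d then (1:ℝ) else 0) * c = 2 * d * c := by
  rw [integral_ite_abs m d hd, intervalIntegral.integral_const, smul_eq_mul]
  ring_nf

lemma integral_ite_abs_sq_const (m d c : ℝ) (hd : 0 ≤ d) :
    ∫ x : ℝ, (x - m)^2 * ((if |x - m| ≤ d then (1:ℝ) else 0) * c) = 2 * d^3 / 3 * c := by
  have : ∀ x : ℝ, (x - m)^2 * ((if |x - m| ≤ d then (1:ℝ) else 0) * c)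
      = (if |x - m| ≤ d then (1:ℝ) else 0) * ((x - m)^2 * c) := fun x => by ring
  simp_rw [this]
  rw [integral_ite_abs m d hd]
  rw [intervalIntegral.integral_mul_const]
  rw [intervalIntegral.integral_comp_sub_right (fun x => x^2) m,
    show m - d - m = -d from by ring, show m + d - m = d from by ring, integral_pow]
  ring

lemma gibbs_pointwise {p φ : ℝ} (hp : 0 ≤ p) (hφ : 0 < φ) :
    p * Real.log φ - p * Real.log p ≤ φ - p := by
  rcases eq_or_lt_of_le hp with h | h
  · rw [← h]
    simp
    positivity
  · have h1 := Real.log_le_sub_one_of_pos (div_pos hφ h)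
    rw [Real.log_div (ne_of_gt hφ) (ne_of_gt h)] at h1
    have h2 := mul_le_mul_of_nonneg_left h1 h.le
    have h3 : p * (φ / p) = φ := by field_simp
    nlinarith

lemma specht_aux {c t : ℝ} (hc : 0 < c) (ht : 0 < t) :
    t ≤ Real.exp (c - 1) / c * Real.exp ((t - 1) * c) := by
  have h1 : Real.log (t * c) ≤ t * c - 1 := Real.log_le_sub_one_of_pos (by positivity)
  have h2 : t * c ≤ Real.exp (t * c - 1) := by
    calc t * c = Real.exp (Real.log (t * c)) := (Real.exp_log (by positivity)).symm
    _ ≤ Real.exp (t * c - 1) := Real.exp_le_exp.2 h1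
  have : Real.exp (c - 1) * Real.exp ((t - 1) * c) = Real.exp (t * c - 1) := by
    rw [← Real.exp_add]; ring_nf
  rw [div_mul_eq_mul_div, this, le_div_iff₀ hc]
  linarith

lemma log_chord {a r y : ℝ} (ha : 0 < a) (hra : 1 < r) (h1 : a ≤ y) (h2 : y ≤ r * a) :
    Real.log a + (y - a) * (Real.log r / (a * (r - 1))) ≤ Real.log y := by
  obtain ⟨b, hb⟩ : ∃ b, b = r * a := ⟨_, rfl⟩
  rw [← hb] at h2
  have hab : a < b := by
    rw [hb]
    nlinarith
  have hne : b - a ≠ 0 := by linarith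
  have hconc := strictConcaveOn_log_Ioi.concaveOn
  have hu : (0:ℝ) ≤ (b - y)/(b - a) := div_nonneg (by linarith) (by linarith)
  have hv : (0:ℝ) ≤ (y - a)/(b - a) := div_nonneg (by linarith) (by linarith)
  have huv : (b - y)/(b - a) + (y - a)/(b - a) = 1 := by
    rw [← add_div, show b - y + (y - a) = b - a from by ring, div_self hne]
  have key := hconc.2 (Set.mem_Ioi.2 ha) (Set.mem_Ioi.2 (lt_trans ha hab)) hu hv huv
  have hcomb : ((b - y)/(b - a)) • a + ((y - a)/(b - a)) • b = y := by
    rw [smul_eq_mul, smul_eq_mul]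
    field_simp
    ring
  rw [hcomb] at key
  have hlogb : Real.log b = Real.log r + Real.log a := by
    rw [hb]; exact Real.log_mul (by linarith) (ne_of_gt ha)
  have hba : b - a = a * (r - 1) := by rw [hb]; ring
  calc Real.log a + (y - a) * (Real.log r / (a * (r - 1)))
      = ((b - y)/(b - a)) • Real.log a + ((y - a)/(b - a)) • Real.log b := by
        rw [hlogb, hba, smul_eq_mul, smul_eq_mul]
        have h0 : a * (r - 1) ≠ 0 := mul_ne_zero (ne_of_gt ha) (by linarith)
        have h0' : r - 1 ≠ 0 := by linarith
        field_simp
        rw [hb]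
        ring
    _ ≤ Real.log y := key

lemma specht {n : ℕ} (hn : 0 < n) (x α : Fin n → ℝ) (r : ℝ) (hra : 1 < r)
    (hx : ∀ i, 0 < x i) (hα : ∀ i, 0 < α i) (hsum : ∑ i, α i = 1)
    (hr : ∀ i j, x i / x j ≤ r) :
    ∑ i, α i * x i ≤
      (r - 1) * r ^ (1 / (r - 1)) / (Real.exp 1 * Real.log r)
        * Real.exp (∑ i, α i * Real.log (x i)) := by
  have hne : (Finset.univ : Finset (Fin n)).Nonempty := univ_nonempty_iff.2 ⟨⟨0, hn⟩⟩
  obtain ⟨i₀, -, hmin⟩ := Finset.exists_min_image univ x hne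
  set a := x i₀ with ha_def
  have ha : 0 < a := hx i₀
  have hub : ∀ i, x i ≤ r * a := fun i => by
    have := hr i i₀
    rw [div_le_iff₀ ha] at this
    linarith
  set c := Real.log r / (r - 1) with hc_def
  have hlogr : 0 < Real.log r := Real.log_pos hra
  have hc : 0 < c := hc_def ▸ div_pos hlogr (by linarith)
  set A := ∑ i, α i * x i with hA_def
  have hA : a ≤ A := by
    calc a = ∑ i, α i * a := by rw [← Finset.sum_mul, hsum, one_mul]
    _ ≤ ∑ i, α i * x i := Finset.sum_le_sum fun i _ =>
        mul_le_mul_of_nonneg_left (hmin i (mem_univ i)) (hα i).le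
  have hApos : 0 < A := lt_of_lt_of_le ha hA
  -- lower bound on ∑ α log x
  have hlb : Real.log a + (A - a) * (Real.log r / (a * (r - 1)))
      ≤ ∑ i, α i * Real.log (x i) := by
    have : ∑ i, α i * (Real.log a + (x i - a) * (Real.log r / (a * (r - 1))))
        ≤ ∑ i, α i * Real.log (x i) :=
      Finset.sum_le_sum fun i _ => mul_le_mul_of_nonneg_left
        (log_chord ha hra (hmin i (mem_univ i)) (hub i)) (hα i).le
    set L := Real.log r / (a * (r - 1)) with hL
    have expand : ∀ i, α i * (Real.log a + (x i - a) * L)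
        = α i * Real.log a + (α i * x i) * L - α i * (a * L) := fun i => by ring
    calc Real.log a + (A - a) * L
        = ∑ i, α i * (Real.log a + (x i - a) * L) := by
          simp_rw [expand]
          rw [Finset.sum_sub_distrib, Finset.sum_add_distrib, ← Finset.sum_mul,
            ← Finset.sum_mul, ← Finset.sum_mul, hsum, one_mul, ← hA_def]
          ring
      _ ≤ _ := this
  -- key pointwise bound with t = A / a
  have ht : 0 < A / a := by positivity
  have key := specht_aux hc ht
  have hS : 0 < Real.exp (c - 1) / c := by positivity
  have hstep : A ≤ Real.exp (c - 1) / c * (a * Real.exp ((A/a - 1) * c)) := by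
    have := mul_le_mul_of_nonneg_left key ha.le
    calc A = a * (A / a) := by field_simp
    _ ≤ a * (Real.exp (c - 1) / c * Real.exp ((A/a - 1) * c)) := this
    _ = Real.exp (c - 1) / c * (a * Real.exp ((A/a - 1) * c)) := by ring
  have hexp : a * Real.exp ((A/a - 1) * c) ≤ Real.exp (∑ i, α i * Real.log (x i)) := by
    have : a * Real.exp ((A/a - 1) * c)
        = Real.exp (Real.log a + (A - a) * (Real.log r / (a * (r - 1)))) := by
      rw [Real.exp_add, Real.exp_log ha]
      congr 2
      rw [hc_def]
      field_simp
      try ring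
    rw [this]
    exact Real.exp_le_exp.2 hlb
  have hfinal : A ≤ Real.exp (c - 1) / c * Real.exp (∑ i, α i * Real.log (x i)) :=
    le_trans hstep (mul_le_mul_of_nonneg_left hexp hS.le)
  have hSM : Real.exp (c - 1) / c
      = (r - 1) * r ^ (1 / (r - 1)) / (Real.exp 1 * Real.log r) := by
    rw [Real.rpow_def_of_pos (by linarith : (0:ℝ) < r)]
    rw [hc_def]
    rw [show c - 1 = Real.log r / (r-1) - 1 from by rw [hc_def]]
    rw [Real.exp_sub]
    rw [show Real.log r * (1 / (r-1)) = Real.log r / (r - 1) from by ring]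
    field_simp
    try ring
  rwa [hSM] at hfinal


/-- Variance bounds for a symmetric unimodal mixture of uniform densities:
`e^{2h(p)}/(2πe) ≤ Var(X) ≤ (M(r)/12) e^{2h(p)}` where `r` is the maximum ratio
`εᵢ²/εⱼ²`. -/
theorem uniform_mixture_variance_bounds (n : ℕ) (hn : 0 < n) (m : ℝ)
    (ε α : Fin n → ℝ) (r : ℝ)
    (hε : ∀ i, 0 < ε i) (hα : ∀ i, 0 < α i) (hsum : ∑ i, α i = 1)
    (hr : ∀ i j, (ε i) ^ 2 / (ε j) ^ 2 ≤ r) (hr' : ∃ i j, (ε i) ^ 2 / (ε j) ^ 2 = r)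
    (p : ℝ → ℝ)
    (hp : ∀ x, p x = ∑ i, α i * (if |x - m| ≤ 1 / (2 * ε i) then ε i else 0)) :
    Real.exp (2 * (-∫ x : ℝ, p x * Real.log (p x))) / (2 * Real.pi * Real.exp 1) ≤
        (∫ x : ℝ, (x - m) ^ 2 * p x) ∧
    (∫ x : ℝ, (x - m) ^ 2 * p x) ≤
        M r / 12 * Real.exp (2 * (-∫ x : ℝ, p x * Real.log (p x))) := by
  have hne : (Finset.univ : Finset (Fin n)).Nonempty := Finset.univ_nonempty_iff.2 ⟨⟨0, hn⟩⟩
  have hr1 : 1 ≤ r := by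
    have := hr ⟨0, hn⟩ ⟨0, hn⟩
    rwa [div_self (by have := hε ⟨0, hn⟩; positivity)] at this
  set d : Fin n → ℝ := fun i => 1 / (2 * ε i) with hd_def
  have hd : ∀ i, 0 < d i := fun i => by
    have := hε i; rw [hd_def]; positivity
  have hp' : ∀ x, p x = ∑ i, (if |x - m| ≤ d i then (1:ℝ) else 0) * (α i * ε i) := by
    intro x
    rw [hp x]
    refine Finset.sum_congr rfl fun i _ => ?_
    by_cases h : |x - m| ≤ d i
    · rw [if_pos (show |x - m| ≤ 1 / (2 * ε i) from h), if_pos h]; ring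
    · rw [if_neg (show ¬|x - m| ≤ 1 / (2 * ε i) from h), if_neg h]; ring
  -- nonnegativity and upper bound
  have hp_nonneg : ∀ x, 0 ≤ p x := by
    intro x
    rw [hp' x]
    apply Finset.sum_nonneg
    intro i _
    have := (hα i).le; have := (hε i).le
    by_cases h : |x - m| ≤ d i <;> simp [h] <;> positivity
  -- measurability
  have hp_meas : Measurable p := by
    have : p = fun x => ∑ i, (if |x - m| ≤ d i then (1:ℝ) else 0) * (α i * ε i) :=
      funext hp'
    rw [this]
    apply Finset.measurable_sum
    intro i _
    apply Measurable.mul _ measurable_const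
    exact Measurable.ite
      ((isClosed_le (by continuity) continuous_const).measurableSet)
      measurable_const measurable_const
  -- integrability and total mass
  have hint_p : Integrable p := by
    rw [funext hp']
    exact integrable_finset_sum _ fun i _ =>
      integrable_ite_abs m (d i) (fun _ => α i * ε i) continuous_const
  have hmass : ∫ x : ℝ, p x = 1 := by
    rw [funext hp', integral_finset_sum _ fun i _ =>
      integrable_ite_abs m (d i) (fun _ => α i * ε i) continuous_const]
    have : ∀ i, ∫ x : ℝ, (if |x - m| ≤ d i then (1:ℝ) else 0) * (α i * ε i)
        = α i := by
      intro i
      rw [integral_ite_abs_const m (d i) _ (hd i).le, hd_def]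
      have := hε i
      field_simp
    rw [Finset.sum_congr rfl fun i _ => this i, hsum]
  -- variance
  set V : ℝ := ∑ i, α i * (1 / (12 * (ε i)^2)) with hV_def
  have hV_pos : 0 < V := by
    rw [hV_def]
    apply Finset.sum_pos (fun i _ => by have := hα i; have := hε i; positivity) hne
  have hint_var : Integrable (fun x => (x - m)^2 * p x) := by
    have : (fun x => (x - m)^2 * p x)
        = fun x => ∑ i, (if |x - m| ≤ d i then (1:ℝ) else 0) * ((x - m)^2 * (α i * ε i)) := by
      funext x
      rw [hp' x, Finset.mul_sum]
      exact Finset.sum_congr rfl fun i _ => by ring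
    rw [this]
    exact integrable_finset_sum _ fun i _ =>
      integrable_ite_abs m (d i) _ (by fun_prop)
  have hvar : ∫ x : ℝ, (x - m)^2 * p x = V := by
    have heq : (fun x => (x - m)^2 * p x)
        = fun x => ∑ i, (x - m)^2 * ((if |x - m| ≤ d i then (1:ℝ) else 0) * (α i * ε i)) := by
      funext x
      rw [hp' x, Finset.mul_sum]
    rw [heq, integral_finset_sum _ fun i _ => ?_]
    · rw [hV_def]
      refine Finset.sum_congr rfl fun i _ => ?_
      rw [integral_ite_abs_sq_const m (d i) _ (hd i).le, hd_def]
      have := hε i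
      field_simp
      ring
    · have : (fun x => (x - m)^2 * ((if |x - m| ≤ d i then (1:ℝ) else 0) * (α i * ε i)))
          = fun x => (if |x - m| ≤ d i then (1:ℝ) else 0) * ((x - m)^2 * (α i * ε i)) := by
        funext x; ring
      rw [this]
      exact integrable_ite_abs m (d i) _ (by fun_prop)
  -- entropy integrand integrability
  have hint_plogp : Integrable (fun x => p x * Real.log (p x)) := by
    obtain ⟨D, hD_pos, hD⟩ : ∃ D, 0 < D ∧ ∀ i, d i ≤ D :=
      ⟨Finset.univ.sup' hne d,
        lt_of_lt_of_le (hd ⟨0, hn⟩) (Finset.le_sup' d (Finset.mem_univ _)),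
        fun i => Finset.le_sup' d (Finset.mem_univ i)⟩
    have hsupp : ∀ x, x ∉ Set.Icc (m - D) (m + D) → p x = 0 := by
      intro x hx
      rw [hp' x]
      apply Finset.sum_eq_zero
      intro i _
      rw [if_neg, zero_mul]
      intro habs
      rw [abs_le] at habs
      exact hx ⟨by linarith [habs.1, hD i], by linarith [habs.2, hD i]⟩
    set B := ∑ i, α i * ε i with hB
    have hB_pos : 0 < B :=
      Finset.sum_pos (fun i _ => mul_pos (hα i) (hε i)) hne
    have hpB : ∀ x, p x ≤ B := by
      intro x
      rw [hp' x, hB]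
      apply Finset.sum_le_sum
      intro i _
      have h1 := (hα i).le; have h2 := (hε i).le
      by_cases h : |x - m| ≤ d i <;> simp [h] <;> positivity
    obtain ⟨k, -, hk⟩ := (isCompact_Icc (a := (0:ℝ)) (b := B)).exists_isMaxOn
      ⟨0, le_refl 0, hB_pos.le⟩
      ((continuous_abs.comp Real.continuous_mul_log).continuousOn)
    have heq : (fun x => p x * Real.log (p x))
        = (Set.Icc (m - D) (m + D)).indicator (fun x => p x * Real.log (p x)) := by
      funext x
      by_cases hx : x ∈ Set.Icc (m - D) (m + D)
      · rw [Set.indicator_of_mem hx]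
      · rw [Set.indicator_of_notMem hx, hsupp x hx]
        simp
    rw [heq]
    apply MeasureTheory.IntegrableOn.integrable_indicator _ measurableSet_Icc
    apply Measure.integrableOn_of_bounded (M := |k * Real.log k|) measure_Icc_lt_top.ne
      (hp_meas.mul (Real.measurable_log.comp hp_meas)).aestronglyMeasurable
    apply ae_of_all
    intro x
    rw [Real.norm_eq_abs]
    exact hk ⟨hp_nonneg x, hpB x⟩
  set H : ℝ := -∫ x : ℝ, p x * Real.log (p x) with hH_def
  -- entropy lower bound via concavity
  have hH_lb : ∑ i, α i * (-Real.log (ε i)) ≤ H := by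
    set f : Fin n → ℝ → ℝ :=
      fun i x => (if |x - m| ≤ d i then (1:ℝ) else 0) * (α i * Real.negMulLog (ε i)) with hf
    have hfint : ∀ i, Integrable (f i) := fun i =>
      integrable_ite_abs m (d i) _ continuous_const
    have hmono : ∀ x, ∑ i, f i x ≤ Real.negMulLog (p x) := by
      intro x
      have hjen := Real.concaveOn_negMulLog.le_map_sum (t := Finset.univ)
        (w := α) (p := fun i => (if |x - m| ≤ d i then (1:ℝ) else 0) * ε i)
        (fun i _ => (hα i).le) hsum
        (fun i _ => by
          by_cases h : |x - m| ≤ d i <;>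
            simp [h, Set.mem_Ici, (hε i).le])
      have h1 : ∑ i, α i • ((if |x - m| ≤ d i then (1:ℝ) else 0) * ε i) = p x := by
        rw [hp' x]
        exact Finset.sum_congr rfl fun i _ => by rw [smul_eq_mul]; ring
      rw [h1] at hjen
      refine le_trans (le_of_eq ?_) hjen
      refine Finset.sum_congr rfl fun i _ => ?_
      rw [hf, smul_eq_mul]
      by_cases h : |x - m| ≤ d i
      · simp only [if_pos h, one_mul]
      · simp only [if_neg h, zero_mul, mul_zero, Real.negMulLog_zero]
    have hnml : Integrable (fun x => Real.negMulLog (p x)) := by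
      have heqn : (fun x => Real.negMulLog (p x)) = fun x => -(p x * Real.log (p x)) := by
        funext x; rw [Real.negMulLog_eq_neg]
      rw [heqn]
      exact hint_plogp.neg
    have hle := integral_mono (integrable_finset_sum _ fun i _ => hfint i) hnml hmono
    have hLHS : ∫ x : ℝ, ∑ i, f i x = ∑ i, α i * (-Real.log (ε i)) := by
      rw [integral_finset_sum _ fun i _ => hfint i]
      refine Finset.sum_congr rfl fun i _ => ?_
      rw [hf]
      rw [integral_ite_abs_const m (d i) _ (hd i).le]
      have hεi := hε i
      rw [hd_def, Real.negMulLog]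
      field_simp
    have hRHS : ∫ x : ℝ, Real.negMulLog (p x) = H := by
      simp only [Real.negMulLog_eq_neg]
      rw [integral_neg, hH_def]
    rw [hLHS, hRHS] at hle
    exact hle
  -- entropy upper bound via Gaussian comparison
  have hH_ub : Real.exp (2 * H) ≤ 2 * Real.pi * Real.exp 1 * V := by
    set C := Real.sqrt (2 * Real.pi * V) with hC
    have hC_pos : 0 < C := Real.sqrt_pos.2 (by positivity)
    set φ : ℝ → ℝ := fun x => Real.exp (-(x - m)^2 / (2*V)) / C with hφ
    have hφ_pos : ∀ x, 0 < φ x := fun x => by rw [hφ]; positivity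
    have hb : (0:ℝ) < 1/(2*V) := by positivity
    have hgexp : ∀ x : ℝ, -(x - m)^2/(2*V) = -(1/(2*V)) * (x-m)^2 := fun x => by
      field_simp
    have hint_gauss : Integrable (fun x : ℝ => Real.exp (-(1/(2*V)) * (x - m)^2)) :=
      (integrable_exp_neg_mul_sq hb).comp_sub_right m
    have hφint : Integrable φ := by
      have : φ = fun x => Real.exp (-(1/(2*V)) * (x - m)^2) / C := by
        funext x; simp only [hφ]; rw [hgexp x]
      rw [this]
      exact hint_gauss.div_const C
    have hφmass : ∫ x : ℝ, φ x = 1 := by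
      have h1 : φ = fun x => Real.exp (-(1/(2*V)) * (x - m)^2) / C := by
        funext x; simp only [hφ]; rw [hgexp x]
      rw [h1, integral_div,
        integral_sub_right_eq_self (fun x => Real.exp (-(1/(2*V)) * x^2)) m,
        integral_gaussian, show Real.pi / (1/(2*V)) = 2*Real.pi*V from by field_simp,
        hC]
      exact div_self (ne_of_gt hC_pos)
    have hlogφ : ∀ x, Real.log (φ x) = -(x - m)^2/(2*V) - Real.log C := fun x => by
      rw [hφ, Real.log_div (Real.exp_ne_zero _) (ne_of_gt hC_pos), Real.log_exp]
    have hrw : (fun x => p x * Real.log (φ x))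
        = fun x => (-(1/(2*V))) * ((x - m)^2 * p x) - Real.log C * p x := by
      funext x
      rw [hlogφ x, hgexp x]
      ring
    have hint_plogφ : Integrable (fun x => p x * Real.log (φ x)) := by
      rw [hrw]
      exact (hint_var.const_mul _).sub (hint_p.const_mul _)
    have hIplogφ : ∫ x : ℝ, p x * Real.log (φ x) = -(1/2) - Real.log C := by
      rw [hrw, integral_sub (hint_var.const_mul _) (hint_p.const_mul _),
        integral_const_mul, integral_const_mul, hvar, hmass, mul_one]
      field_simp
    have hgibbs : (∫ x : ℝ, p x * Real.log (φ x)) - (∫ x : ℝ, p x * Real.log (p x)) ≤ 0 := by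
      have hpt : ∀ x, p x * Real.log (φ x) - p x * Real.log (p x) ≤ φ x - p x := fun x =>
        gibbs_pointwise (hp_nonneg x) (hφ_pos x)
      have h2 := integral_mono (hint_plogφ.sub hint_plogp) (hφint.sub hint_p) hpt
      simp only [Pi.sub_apply] at h2
      rw [integral_sub hint_plogφ hint_plogp, integral_sub hφint hint_p, hφmass,
        hmass] at h2
      linarith
    have hHle : H ≤ 1/2 + Real.log C := by
      rw [hH_def]
      rw [hIplogφ] at hgibbs
      linarith
    have hlogC : Real.log C = Real.log (2*Real.pi*V) / 2 := by
      rw [hC, Real.log_sqrt (by positivity)]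
    have hfin : 2 * H ≤ 1 + Real.log (2*Real.pi*V) := by
      rw [hlogC] at hHle
      linarith
    calc Real.exp (2*H) ≤ Real.exp (1 + Real.log (2*Real.pi*V)) := Real.exp_le_exp.2 hfin
      _ = Real.exp 1 * (2*Real.pi*V) := by rw [Real.exp_add, Real.exp_log (by positivity)]
      _ = 2*Real.pi*Real.exp 1*V := by ring
  -- AM-GM / Specht bound
  have hAMGM : ∑ i, α i * (1 / (ε i)^2)
      ≤ M r * Real.exp (∑ i, α i * Real.log (1 / (ε i)^2)) := by
    rcases eq_or_lt_of_le hr1 with h1 | h1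
    · have hall : ∀ i j, (1:ℝ) / (ε i)^2 = 1 / (ε j)^2 := by
        intro i j
        have h2 := hr i j; have h3 := hr j i
        rw [← h1] at h2 h3
        have hi := hε i; have hj := hε j
        have h4 : ε i ^ 2 = ε j ^ 2 := le_antisymm
          (by rwa [div_le_one (by positivity)] at h2)
          (by rwa [div_le_one (by positivity)] at h3)
        rw [h4]
      have i₀ : Fin n := ⟨0, hn⟩
      have hsum2 : ∑ i, α i * Real.log (1/(ε i)^2) = Real.log (1/(ε i₀)^2) := by
        rw [Finset.sum_congr rfl (fun i _ => by rw [hall i i₀]), ← Finset.sum_mul, hsum,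
          one_mul]
      have hsum3 : ∑ i, α i * (1/(ε i)^2) = 1/(ε i₀)^2 := by
        rw [Finset.sum_congr rfl (fun i _ => by rw [hall i i₀]), ← Finset.sum_mul, hsum,
          one_mul]
      have hpos : (0:ℝ) < 1/(ε i₀)^2 := by have := hε i₀; positivity
      rw [M, if_pos h1.symm, hsum2, hsum3, Real.exp_log hpos, one_mul]
    · have hratio : ∀ i j, (1/(ε i)^2) / (1/(ε j)^2) ≤ r := by
        intro i j
        have h2 := hr j i
        have hi := hε i; have hj := hε j
        rw [show (1/(ε i)^2) / (1/(ε j)^2) = (ε j)^2/(ε i)^2 from by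
          rw [one_div, one_div, inv_div_inv]]
        exact h2
      have hspecht := specht hn (fun i => 1/(ε i)^2) α r h1
        (fun i => by have := hε i; positivity) hα hsum hratio
      rw [M, if_neg (by linarith)]
      exact hspecht
  constructor
  · rw [hvar]
    rw [div_le_iff₀ (by positivity)]
    linarith [hH_ub]
  · rw [hvar]
    have hM_pos : 0 < M r := by
      rcases eq_or_lt_of_le hr1 with h1 | h1
      · rw [M, if_pos h1.symm]; norm_num
      · rw [M, if_neg (by linarith)]
        have hlr : 0 < Real.log r := Real.log_pos h1
        have h2 : (0:ℝ) < r ^ (1 / (r - 1)) := Real.rpow_pos_of_pos (by linarith) _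
        exact div_pos (mul_pos (by linarith) h2) (mul_pos (Real.exp_pos 1) hlr)
    have hlog : ∑ i, α i * Real.log (1 / (ε i)^2) ≤ 2 * H := by
      have : ∀ i, α i * Real.log (1 / (ε i)^2) = 2 * (α i * (-Real.log (ε i))) := by
        intro i
        have := hε i
        rw [one_div, Real.log_inv, Real.log_pow]
        push_cast
        ring
      rw [Finset.sum_congr rfl fun i _ => this i, ← Finset.mul_sum]
      linarith [hH_lb]
    have hVeq : V = (∑ i, α i * (1 / (ε i)^2)) / 12 := by
      rw [hV_def, Finset.sum_div]
      refine Finset.sum_congr rfl fun i _ => ?_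
      have := hε i
      field_simp
      try ring
      try tauto
    have h2 : M r * Real.exp (∑ i, α i * Real.log (1 / (ε i)^2)) ≤ M r * Real.exp (2 * H) :=
      mul_le_mul_of_nonneg_left (Real.exp_le_exp.2 hlog) hM_pos.le
    calc V = (∑ i, α i * (1 / (ε i)^2)) / 12 := hVeq
      _ ≤ M r * Real.exp (2 * H) / 12 := by linarith [hAMGM]
      _ = M r / 12 * Real.exp (2 * H) := by ring
end
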